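/- Let $H$ be a self-adjoint matrix with orthonormal eigenbasis $\{\phi_k\}$ and eigenvalues $\lambda_k$, let $G$ be any matrix, and let $J$ be a set of eigenvalue indices. Then $\tfrac12\sum_{j\in J}(z-\lambda_j)^2\big(\langle[G^*,[H,G]]\phi_j,\phi_j\rangle+\langle[G,[H,G^*]]\phi_j,\phi_j\rangle\big)-\sum_{j\in J}(z-\lambda_j)\big(\|[H,G]\phi_j\|^2+\|[H,G^*]\phi_j\|^2\big)=\sum_{j\in J}\sum_{k\notin J}(z-\lambda_j)(z-\lambda_k)(\lambda_k-\lambda_j)\big(|\langle G\phi_j,\phi_k\rangle|^2+|\langle G^*\phi_j,\phi_k\rangle|^2\big)$, i.e., the terms with $k\in J$ drop out by antisymmetry. -/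
import Mathlib


open scoped InnerProductSpace

/-- Commutator of two endomorphisms. -/
def opComm {R : Type*} [Ring R] (A B : R) : R := A * B - B * A

section Aux

variable {n : ℕ}

private lemma opComm_apply (A B : EuclideanSpace ℂ (Fin n) →ₗ[ℂ] EuclideanSpace ℂ (Fin n))
    (x : EuclideanSpace ℂ (Fin n)) : opComm A B x = A (B x) - B (A x) := rfl

private lemma inner_H_left (H : EuclideanSpace ℂ (Fin n) →ₗ[ℂ] EuclideanSpace ℂ (Fin n))
    (hH : LinearMap.adjoint H = H)
    (b : OrthonormalBasis (Fin n) ℂ (EuclideanSpace ℂ (Fin n)))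
    (lam : Fin n → ℝ) (heig : ∀ k, H (b k) = (lam k : ℂ) • b k)
    (j : Fin n) (x : EuclideanSpace ℂ (Fin n)) :
    ⟪b j, H x⟫_ℂ = (lam j : ℂ) * ⟪b j, x⟫_ℂ := by
  calc ⟪b j, H x⟫_ℂ = ⟪(LinearMap.adjoint H) (b j), x⟫_ℂ :=
        (LinearMap.adjoint_inner_left H x (b j)).symm
    _ = ⟪((lam j : ℂ) • b j : EuclideanSpace ℂ (Fin n)), x⟫_ℂ := by rw [hH, heig]
    _ = (lam j : ℂ) * ⟪b j, x⟫_ℂ := by rw [inner_smul_left, Complex.conj_ofReal]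

private lemma comm_elem (H G : EuclideanSpace ℂ (Fin n) →ₗ[ℂ] EuclideanSpace ℂ (Fin n))
    (hH : LinearMap.adjoint H = H)
    (b : OrthonormalBasis (Fin n) ℂ (EuclideanSpace ℂ (Fin n)))
    (lam : Fin n → ℝ) (heig : ∀ k, H (b k) = (lam k : ℂ) • b k)
    (j k : Fin n) :
    ⟪b j, opComm H G (b k)⟫_ℂ = ((lam j : ℂ) - lam k) * ⟪b j, G (b k)⟫_ℂ := by
  rw [opComm_apply, inner_sub_right, inner_H_left H hH b lam heig, heig, map_smul,
    inner_smul_right]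
  ring

private lemma norm_sq_eq (b : OrthonormalBasis (Fin n) ℂ (EuclideanSpace ℂ (Fin n)))
    (x : EuclideanSpace ℂ (Fin n)) :
    ((‖x‖^2 : ℝ) : ℂ) = ∑ k, ((‖⟪b k, x⟫_ℂ‖^2 : ℝ) : ℂ) := by
  have h := inner_self_eq_norm_sq_to_K (𝕜 := ℂ) x
  rw [← b.sum_inner_mul_inner x x] at h
  have h2 : ((‖x‖^2 : ℝ) : ℂ) = ∑ i, ⟪x, b i⟫_ℂ * ⟪b i, x⟫_ℂ := by exact_mod_cast h.symm
  rw [h2]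
  refine Finset.sum_congr rfl fun k _ => ?_
  rw [← inner_conj_symm x (b k)]
  have hm := Complex.mul_conj' (⟪b k, x⟫_ℂ)
  push_cast at hm ⊢
  linear_combination hm

private lemma Q_eq (H G : EuclideanSpace ℂ (Fin n) →ₗ[ℂ] EuclideanSpace ℂ (Fin n))
    (hH : LinearMap.adjoint H = H)
    (b : OrthonormalBasis (Fin n) ℂ (EuclideanSpace ℂ (Fin n)))
    (lam : Fin n → ℝ) (heig : ∀ k, H (b k) = (lam k : ℂ) • b k)
    (j : Fin n) :
    ⟪opComm (LinearMap.adjoint G) (opComm H G) (b j), b j⟫_ℂ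
      = ∑ k, ((lam k : ℂ) - lam j) *
          (((‖⟪b k, G (b j)⟫_ℂ‖^2 + ‖⟪b j, G (b k)⟫_ℂ‖^2 : ℝ)) : ℂ) := by
  rw [opComm_apply, inner_sub_left]
  have h1 : ⟪(LinearMap.adjoint G) (opComm H G (b j)), b j⟫_ℂ
      = ∑ k, ((lam k : ℂ) - lam j) * ((‖⟪b k, G (b j)⟫_ℂ‖^2 : ℝ) : ℂ) := by
    rw [LinearMap.adjoint_inner_left, ← b.sum_inner_mul_inner (opComm H G (b j)) (G (b j))]
    refine Finset.sum_congr rfl fun k _ => ?_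
    rw [← inner_conj_symm (opComm H G (b j)) (b k), comm_elem H G hH b lam heig k j,
      map_mul, map_sub, Complex.conj_ofReal, Complex.conj_ofReal]
    have hm := Complex.mul_conj' (⟪b k, G (b j)⟫_ℂ)
    push_cast at hm ⊢
    linear_combination ((lam k : ℂ) - lam j) * hm
  have h2 : ⟪opComm H G ((LinearMap.adjoint G) (b j)), b j⟫_ℂ
      = ∑ k, ((lam j : ℂ) - lam k) * ((‖⟪b j, G (b k)⟫_ℂ‖^2 : ℝ) : ℂ) := by
    have hx : (LinearMap.adjoint G) (b j)
        = ∑ k, ⟪b k, (LinearMap.adjoint G) (b j)⟫_ℂ • b k := (b.sum_repr' _).symm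
    rw [hx, map_sum, sum_inner]
    refine Finset.sum_congr rfl fun k _ => ?_
    rw [map_smul, inner_smul_left, LinearMap.adjoint_inner_right,
      ← inner_conj_symm (G (b k)) (b j), Complex.conj_conj,
      ← inner_conj_symm (opComm H G (b k)) (b j), comm_elem H G hH b lam heig j k,
      map_mul, map_sub, Complex.conj_ofReal, Complex.conj_ofReal]
    have hm := Complex.mul_conj' (⟪b j, G (b k)⟫_ℂ)
    push_cast at hm ⊢
    linear_combination ((lam j : ℂ) - lam k) * hm
  rw [h1, h2, ← Finset.sum_sub_distrib]
  refine Finset.sum_congr rfl fun k _ => ?_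
  all_goals (push_cast; try ring)

private lemma N_eq (H G : EuclideanSpace ℂ (Fin n) →ₗ[ℂ] EuclideanSpace ℂ (Fin n))
    (hH : LinearMap.adjoint H = H)
    (b : OrthonormalBasis (Fin n) ℂ (EuclideanSpace ℂ (Fin n)))
    (lam : Fin n → ℝ) (heig : ∀ k, H (b k) = (lam k : ℂ) • b k)
    (j : Fin n) :
    ((‖opComm H G (b j)‖^2 : ℝ) : ℂ)
      = ∑ k, (((lam k - lam j)^2 * ‖⟪b k, G (b j)⟫_ℂ‖^2 : ℝ) : ℂ) := by
  rw [norm_sq_eq b]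
  refine Finset.sum_congr rfl fun k _ => ?_
  rw [comm_elem H G hH b lam heig k j]
  have h : ((lam k : ℂ) - lam j) = ((lam k - lam j : ℝ) : ℂ) := by push_cast; ring
  rw [h, norm_mul, Complex.norm_real, mul_pow, Real.norm_eq_abs, sq_abs]

end Aux

/-- sum rule over a subset `J` of eigenvalue indices: the terms with
`k ∈ J` drop out by antisymmetry, leaving a double sum over `j ∈ J`, `k ∉ J`. -/
theorem stmt_2 (n : ℕ)
    (H G : EuclideanSpace ℂ (Fin n) →ₗ[ℂ] EuclideanSpace ℂ (Fin n))
    (hH : LinearMap.adjoint H = H)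
    (b : OrthonormalBasis (Fin n) ℂ (EuclideanSpace ℂ (Fin n)))
    (lam : Fin n → ℝ)
    (heig : ∀ k, H (b k) = (lam k : ℂ) • b k)
    (z : ℝ) (J : Finset (Fin n)) :
    (1/2 : ℂ) * ∑ j ∈ J, ((z : ℂ) - lam j)^2 *
        (⟪opComm (LinearMap.adjoint G) (opComm H G) (b j), b j⟫_ℂ
          + ⟪opComm G (opComm H (LinearMap.adjoint G)) (b j), b j⟫_ℂ)
      - ∑ j ∈ J, ((z : ℂ) - lam j) *
        ((‖opComm H G (b j)‖^2 + ‖opComm H (LinearMap.adjoint G) (b j)‖^2 : ℝ) : ℂ)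
    = ∑ j ∈ J, ∑ k ∈ Jᶜ, (((z - lam j) * (z - lam k) * (lam k - lam j) *
        (‖⟪G (b j), b k⟫_ℂ‖^2 + ‖⟪LinearMap.adjoint G (b j), b k⟫_ℂ‖^2) : ℝ) : ℂ) := by
  classical
  set S : Fin n → Fin n → ℝ := fun j k => (z - lam j) * (z - lam k) * (lam k - lam j) *
      (‖⟪b k, G (b j)⟫_ℂ‖^2 + ‖⟪b j, G (b k)⟫_ℂ‖^2) with hS
  -- Rewrite the RHS in terms of S
  have hRHS : ∑ j ∈ J, ∑ k ∈ Jᶜ, (((z - lam j) * (z - lam k) * (lam k - lam j) *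
        (‖⟪G (b j), b k⟫_ℂ‖^2 + ‖⟪LinearMap.adjoint G (b j), b k⟫_ℂ‖^2) : ℝ) : ℂ)
      = ∑ j ∈ J, ∑ k ∈ Jᶜ, ((S j k : ℝ) : ℂ) := by
    refine Finset.sum_congr rfl fun j _ => Finset.sum_congr rfl fun k _ => ?_
    rw [hS]
    rw [norm_inner_symm (G (b j)) (b k), LinearMap.adjoint_inner_left]
  rw [hRHS]
  -- Rewrite the LHS as a full double sum
  have hQ2 : ∀ j, ⟪opComm G (opComm H (LinearMap.adjoint G)) (b j), b j⟫_ℂ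
      = ∑ k, ((lam k : ℂ) - lam j) *
          (((‖⟪b k, G (b j)⟫_ℂ‖^2 + ‖⟪b j, G (b k)⟫_ℂ‖^2 : ℝ)) : ℂ) := by
    intro j
    have h := Q_eq H (LinearMap.adjoint G) hH b lam heig j
    rw [LinearMap.adjoint_adjoint] at h
    rw [h]
    refine Finset.sum_congr rfl fun k _ => ?_
    rw [LinearMap.adjoint_inner_right, LinearMap.adjoint_inner_right,
      norm_inner_symm (G (b k)) (b j), norm_inner_symm (G (b j)) (b k)]
    push_cast
    ring
  have hN2 : ∀ j, ((‖opComm H (LinearMap.adjoint G) (b j)‖^2 : ℝ) : ℂ)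
      = ∑ k, (((lam k - lam j)^2 * ‖⟪b j, G (b k)⟫_ℂ‖^2 : ℝ) : ℂ) := by
    intro j
    rw [N_eq H (LinearMap.adjoint G) hH b lam heig j]
    refine Finset.sum_congr rfl fun k _ => ?_
    rw [LinearMap.adjoint_inner_right, norm_inner_symm (G (b k)) (b j)]
  have hLHS : (1/2 : ℂ) * ∑ j ∈ J, ((z : ℂ) - lam j)^2 *
        (⟪opComm (LinearMap.adjoint G) (opComm H G) (b j), b j⟫_ℂ
          + ⟪opComm G (opComm H (LinearMap.adjoint G)) (b j), b j⟫_ℂ)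
      - ∑ j ∈ J, ((z : ℂ) - lam j) *
        ((‖opComm H G (b j)‖^2 + ‖opComm H (LinearMap.adjoint G) (b j)‖^2 : ℝ) : ℂ)
      = ∑ j ∈ J, ∑ k, ((S j k : ℝ) : ℂ) := by
    rw [Finset.mul_sum, ← Finset.sum_sub_distrib]
    refine Finset.sum_congr rfl fun j _ => ?_
    have hsplit : ((‖opComm H G (b j)‖^2 + ‖opComm H (LinearMap.adjoint G) (b j)‖^2 : ℝ) : ℂ)
        = ((‖opComm H G (b j)‖^2 : ℝ) : ℂ)
          + ((‖opComm H (LinearMap.adjoint G) (b j)‖^2 : ℝ) : ℂ) := by push_cast; ring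
    rw [hsplit, Q_eq H G hH b lam heig j, hQ2 j, N_eq H G hH b lam heig j, hN2 j,
      ← Finset.sum_add_distrib, ← Finset.sum_add_distrib, Finset.mul_sum, Finset.mul_sum,
      Finset.mul_sum, ← Finset.sum_sub_distrib]
    refine Finset.sum_congr rfl fun k _ => ?_
    rw [hS]
    push_cast
    ring
  rw [hLHS]
  -- Split the inner sum over univ into J and Jᶜ
  have hsplit : ∀ j, (∑ k, ((S j k : ℝ) : ℂ))
      = ∑ k ∈ J, ((S j k : ℝ) : ℂ) + ∑ k ∈ Jᶜ, ((S j k : ℝ) : ℂ) := fun j =>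
    (Finset.sum_add_sum_compl J _).symm
  simp_rw [hsplit, Finset.sum_add_distrib]
  -- The J-J double sum vanishes by antisymmetry
  have hanti : ∀ j k, ((S j k : ℝ) : ℂ) + ((S k j : ℝ) : ℂ) = 0 := by
    intro j k
    rw [hS]
    push_cast
    ring
  have hzero : (∑ j ∈ J, ∑ k ∈ J, ((S j k : ℝ) : ℂ)) = 0 := by
    have hs : (∑ j ∈ J, ∑ k ∈ J, ((S j k : ℝ) : ℂ))
        + (∑ j ∈ J, ∑ k ∈ J, ((S j k : ℝ) : ℂ)) = 0 := by
      nth_rewrite 2 [Finset.sum_comm]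
      rw [← Finset.sum_add_distrib]
      refine Finset.sum_eq_zero fun j _ => ?_
      rw [← Finset.sum_add_distrib]
      exact Finset.sum_eq_zero fun k _ => hanti j k
    exact add_self_eq_zero.mp hs
  rw [hzero, zero_add]
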